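/- Let A = {A_i}_{i=1}^{N_A} and B = {B_j}_{j=1}^{N_B} be POVMs on the Hilbert space ℂ^N and let ρ be a density operator on ℂ^N. For any two entropic functional pairs (h_A,φ_A) and (h_B,φ_B), one has the explicit (generally weaker) lower bound H_{(h_A,φ_A)}(p(A,ρ)) + H_{(h_B,φ_B)}(p(B,ρ)) ≥ D_{(h_A,φ_A)}(γ_A) + D_{(h_B,φ_B)}(γ_B), valid whatever the overlap triplet is (in particular even when γ_{A,B} > γ_A + γ_B). -/

import Mathlib

open scoped BigOperators ComplexOrder

noncomputable section

/-- An entropic functional pair `(h, φ)` in the sense of Salicrú: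
`φ : [0,1] → ℝ` is continuous and strictly concave (resp. strictly convex) with `φ 0 = 0`,
and `h : ℝ → ℝ` is continuous and strictly increasing (resp. strictly decreasing)
with `h (φ 1) = 0`. -/
structure EntropicPair where
  phi : ℝ → ℝ
  h : ℝ → ℝ
  phi_cont : ContinuousOn phi (Set.Icc 0 1)
  h_cont : Continuous h
  phi_zero : phi 0 = 0
  norm_zero : h (phi 1) = 0
  admissible : (StrictConcaveOn ℝ (Set.Icc (0:ℝ) 1) phi ∧ StrictMono h) ∨
               (StrictConvexOn ℝ (Set.Icc (0:ℝ) 1) phi ∧ StrictAnti h)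

/-- `p` is a probability vector. -/
def IsProbVec {ι : Type*} [Fintype ι] (p : ι → ℝ) : Prop :=
  (∀ k, 0 ≤ p k) ∧ ∑ k, p k = 1

/-- The Salicrú `(h,φ)`-entropy of a probability vector. -/
noncomputable def EntropicPair.H (e : EntropicPair) {ι : Type*} [Fintype ι] (p : ι → ℝ) : ℝ :=
  e.h (∑ k, e.phi (p k))

/-- The minimal `(h,φ)`-entropy among probability vectors with maximal component `P`. -/
noncomputable def EntropicPair.Hmin (e : EntropicPair) (P : ℝ) : ℝ :=
  e.h ((⌊1 / P⌋₊ : ℝ) * e.phi P + e.phi (1 - (⌊1 / P⌋₊ : ℝ) * P))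

/-- `D_{(h,φ)}(θ) = h(⌊1/cos²θ⌋ φ(cos²θ) + φ(1 − ⌊1/cos²θ⌋ cos²θ))`. -/
noncomputable def EntropicPair.D (e : EntropicPair) (θ : ℝ) : ℝ :=
  e.Hmin (Real.cos θ ^ 2)

/-- A POVM: a finite family of positive semidefinite matrices summing to the identity. -/
def IsPOVM {N M : ℕ} (A : Fin M → Matrix (Fin N) (Fin N) ℂ) : Prop :=
  (∀ i, (A i).PosSemidef) ∧ ∑ i, A i = 1

/-- A density operator: positive semidefinite with unit trace. -/
def IsDensityOp {N : ℕ} (ρ : Matrix (Fin N) (Fin N) ℂ) : Prop :=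
  ρ.PosSemidef ∧ ρ.trace = 1

/-- The operator (spectral) norm of a matrix, acting on Euclidean space. -/
noncomputable def opNorm {N : ℕ} (M : Matrix (Fin N) (Fin N) ℂ) : ℝ :=
  ‖(Matrix.toEuclideanCLM (𝕜 := ℂ) M : EuclideanSpace ℂ (Fin N) →L[ℂ] EuclideanSpace ℂ (Fin N))‖

/-- The positive semidefinite square root (junk value `0` on non-PSD matrices). -/
noncomputable def psdSqrt {N : ℕ} (M : Matrix (Fin N) (Fin N) ℂ) : Matrix (Fin N) (Fin N) ℂ :=
  open scoped Classical in
  if h : M.PosSemidef then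
    (h.1.eigenvectorUnitary : Matrix (Fin N) (Fin N) ℂ) *
      Matrix.diagonal (((↑) : ℝ → ℂ) ∘ Real.sqrt ∘ h.1.eigenvalues) *
      (star h.1.eigenvectorUnitary : Matrix (Fin N) (Fin N) ℂ)
  else 0

/-- Outcome probabilities `p_i(A,ρ) = Tr (A_i ρ)`. -/
noncomputable def probVec {N M : ℕ} (A : Fin M → Matrix (Fin N) (Fin N) ℂ)
    (ρ : Matrix (Fin N) (Fin N) ℂ) : Fin M → ℝ :=
  fun i => ((A i * ρ).trace).re

/-- Overlap `c_A = max_i ‖√A_i‖`. -/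
noncomputable def covA {N M : ℕ} (A : Fin M → Matrix (Fin N) (Fin N) ℂ) : ℝ :=
  ⨆ i, opNorm (psdSqrt (A i))

/-- Overlap `c_{A,B} = max_{i,j} ‖√A_i √B_j‖`. -/
noncomputable def covAB {N Ma Mb : ℕ} (A : Fin Ma → Matrix (Fin N) (Fin N) ℂ)
    (B : Fin Mb → Matrix (Fin N) (Fin N) ℂ) : ℝ :=
  ⨆ i, ⨆ j, opNorm (psdSqrt (A i) * psdSqrt (B j))

/-! ### Auxiliary results on concave functions and minimal Salicrú entropies -/

section ConcaveAux

lemma chord_le {φ : ℝ → ℝ} (hφ : ConcaveOn ℝ (Set.Icc (0:ℝ) 1) φ)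
    {a b u v : ℝ} (ha : 0 ≤ a) (hb : b ≤ 1) (hu : a ≤ u) (hu' : u ≤ b)
    (hv : a ≤ v) (hv' : v ≤ b) (huv : u + v = a + b) :
    φ a + φ b ≤ φ u + φ v := by
  have hab : a ≤ b := le_trans hu hu'
  rcases eq_or_lt_of_le hab with h | h
  · have h1 : u = a := le_antisymm (h ▸ hu') hu
    have h2 : v = b := by linarith
    rw [h1, h2, add_comm]
  · set l := (b - u) / (b - a) with hl
    have hba : b - a ≠ 0 := sub_ne_zero.mpr (ne_of_gt h)
    have hkey : l * (b - a) = b - u := div_mul_cancel₀ _ hba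
    have hl0 : 0 ≤ l := div_nonneg (by linarith) (by linarith)
    have hl1 : l ≤ 1 := by
      rw [hl, div_le_one (by linarith)]; linarith
    have hmema : a ∈ Set.Icc (0:ℝ) 1 := ⟨ha, by linarith⟩
    have hmemb : b ∈ Set.Icc (0:ℝ) 1 := ⟨by linarith, hb⟩
    have h1 := hφ.2 hmema hmemb hl0 (by linarith : (0:ℝ) ≤ 1 - l) (by ring)
    have h2 := hφ.2 hmema hmemb (by linarith : (0:ℝ) ≤ 1 - l) hl0 (by ring)
    simp only [smul_eq_mul] at h1 h2
    have hu_eq : l * a + (1 - l) * b = u := by linear_combination -hkey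
    have hv_eq : (1 - l) * a + l * b = v := by linear_combination hkey - huv
    rw [hu_eq] at h1
    rw [hv_eq] at h2
    linarith

lemma g_step {φ : ℝ → ℝ} (hφ : ConcaveOn ℝ (Set.Icc (0:ℝ) 1) φ) (hφ0 : φ 0 = 0)
    {P s x : ℝ} (hP : 0 < P) (hP1 : P ≤ 1) (hs : 0 ≤ s) (hx : 0 ≤ x) (hxP : x ≤ P)
    (hsx : s + x ≤ 1) :
    (⌊(s + x) / P⌋₊ : ℝ) * φ P + φ (s + x - ⌊(s + x) / P⌋₊ * P) ≤
      ((⌊s / P⌋₊ : ℝ) * φ P + φ (s - ⌊s / P⌋₊ * P)) + φ x := by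
  set m : ℕ := ⌊s / P⌋₊ with hm
  have h1 : (m : ℝ) ≤ s / P := Nat.floor_le (div_nonneg hs hP.le)
  have hmP : (m : ℝ) * P ≤ s := (le_div_iff₀ hP).mp h1
  have h2 : s < ((m : ℝ) + 1) * P := by
    have h := Nat.lt_floor_add_one (s / P)
    rw [div_lt_iff₀ hP] at h
    exact_mod_cast h
  have hmP0 : 0 ≤ (m : ℝ) * P := by positivity
  by_cases hcase : s + x < ((m : ℝ) + 1) * P
  · have hfloor : ⌊(s + x) / P⌋₊ = m := by
      rw [Nat.floor_eq_iff (div_nonneg (by linarith) hP.le)]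
      constructor
      · exact (le_div_iff₀ hP).mpr (by linarith)
      · rw [div_lt_iff₀ hP]; push_cast; linarith
    rw [hfloor]
    have hch := chord_le hφ (a := 0) (b := s + x - (m : ℝ) * P)
      (u := s - (m : ℝ) * P) (v := x)
      (le_refl 0) (by linarith) (by linarith) (by linarith) hx (by linarith) (by ring)
    rw [hφ0] at hch
    linarith
  · push_neg at hcase
    have hfloor : ⌊(s + x) / P⌋₊ = m + 1 := by
      rw [Nat.floor_eq_iff (div_nonneg (by linarith) hP.le)]
      constructor
      · push_cast
        exact (le_div_iff₀ hP).mpr (by linarith)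
      · push_cast
        rw [div_lt_iff₀ hP]
        linarith
    rw [hfloor]
    push_cast
    have hch := chord_le hφ (a := s + x - ((m : ℝ) + 1) * P) (b := P)
      (u := s - (m : ℝ) * P) (v := x)
      (by linarith) hP1 (by linarith) (by linarith) (by linarith) hxP (by ring)
    linarith

lemma sum_phi_ge {φ : ℝ → ℝ} (hφ : ConcaveOn ℝ (Set.Icc (0:ℝ) 1) φ) (hφ0 : φ 0 = 0)
    {ι : Type*} {P : ℝ} (hP : 0 < P) (hP1 : P ≤ 1) (p : ι → ℝ)
    (hp0 : ∀ k, 0 ≤ p k) (hpP : ∀ k, p k ≤ P) :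
    ∀ s : Finset ι, (∑ k ∈ s, p k ≤ 1) →
      (⌊(∑ k ∈ s, p k) / P⌋₊ : ℝ) * φ P
        + φ ((∑ k ∈ s, p k) - ⌊(∑ k ∈ s, p k) / P⌋₊ * P)
      ≤ ∑ k ∈ s, φ (p k) := by
  classical
  intro s
  induction s using Finset.induction_on with
  | empty => intro _; simp [hφ0]
  | @insert a s ha ih =>
    rw [Finset.sum_insert ha, Finset.sum_insert ha]
    intro hsum1
    have hs0 : 0 ≤ ∑ k ∈ s, p k := Finset.sum_nonneg fun k _ => hp0 k
    have hle : ∑ k ∈ s, p k ≤ 1 := by linarith [hp0 a]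
    have hstep := g_step hφ hφ0 hP hP1 hs0 (hp0 a) (hpP a) (by linarith)
    rw [add_comm (p a) (∑ k ∈ s, p k)]
    linarith [ih hle]

lemma Hmin_le_H (e : EntropicPair) {ι : Type*} [Fintype ι] (p : ι → ℝ)
    (hp : IsProbVec p) {P : ℝ} (hP1 : P ≤ 1) (hub : ∀ k, p k ≤ P) :
    e.Hmin P ≤ e.H p := by
  have hP : 0 < P := by
    by_contra hc
    push_neg at hc
    have h0 : ∑ k, p k ≤ 0 := Finset.sum_nonpos fun k _ => le_trans (hub k) hc
    rw [hp.2] at h0; linarith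
  have key : ∀ ψ : ℝ → ℝ, ConcaveOn ℝ (Set.Icc (0:ℝ) 1) ψ → ψ 0 = 0 →
      (⌊(1:ℝ) / P⌋₊ : ℝ) * ψ P + ψ (1 - (⌊(1:ℝ) / P⌋₊ : ℝ) * P) ≤ ∑ k, ψ (p k) := by
    intro ψ hψ hψ0
    have h := sum_phi_ge hψ hψ0 hP hP1 p hp.1 hub Finset.univ (le_of_eq hp.2)
    rwa [hp.2] at h
  unfold EntropicPair.H EntropicPair.Hmin
  rcases e.admissible with ⟨hcc, hmono⟩ | ⟨hcv, hanti⟩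
  · exact hmono.monotone (key e.phi hcc.concaveOn e.phi_zero)
  · have h := key (-e.phi) hcv.convexOn.neg (by simp [e.phi_zero])
    simp only [Pi.neg_apply, Finset.sum_neg_distrib] at h
    exact hanti.antitone (by linarith)

end ConcaveAux

/-! ### Auxiliary results on PSD matrices and the operator norm -/

section QuantumAux

open scoped Matrix

variable {n : ℕ}

lemma posSemidef_trace_nonneg {M : Matrix (Fin n) (Fin n) ℂ} (hM : M.PosSemidef) :
    0 ≤ M.trace := by
  rw [Matrix.trace]
  apply Finset.sum_nonneg
  intro i _
  have h := hM.dotProduct_mulVec_nonneg (Pi.single i 1)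
  simpa [dotProduct, Pi.single_apply] using h

lemma psdSqrt_facts {M : Matrix (Fin n) (Fin n) ℂ} (hM : M.PosSemidef) :
    (psdSqrt M).PosSemidef ∧ psdSqrt M * psdSqrt M = M := by
  unfold psdSqrt
  rw [dif_pos hM]
  set U : Matrix (Fin n) (Fin n) ℂ := (hM.1.eigenvectorUnitary : Matrix (Fin n) (Fin n) ℂ)
    with hU
  have hUU : star U * U = 1 := by simp [hU]
  set D := Matrix.diagonal (((↑) : ℝ → ℂ) ∘ Real.sqrt ∘ hM.1.eigenvalues) with hD
  constructor
  · have hDp : D.PosSemidef := Matrix.PosSemidef.diagonal (fun i => by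
        simp only [Function.comp_apply, Pi.zero_apply]
        exact Complex.zero_le_real.mpr (Real.sqrt_nonneg _))
    have := hDp.mul_mul_conjTranspose_same U
    rwa [← Matrix.star_eq_conjTranspose] at this
  · have hspec := hM.1.spectral_theorem
    simp only [Unitary.conjStarAlgAut_apply, Unitary.coe_star] at hspec
    have hDD : D * D = Matrix.diagonal (RCLike.ofReal ∘ hM.1.eigenvalues) := by
      rw [hD, Matrix.diagonal_mul_diagonal]
      congr 1
      funext i
      simp only [Function.comp_apply]
      rw [← Complex.ofReal_mul, Real.mul_self_sqrt (hM.eigenvalues_nonneg i)]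
      rfl
    calc U * D * star U * (U * D * star U) = U * D * (star U * U) * D * star U := by noncomm_ring
      _ = U * (D * D) * star U := by rw [hUU]; noncomm_ring
      _ = M := by rw [hDD]; exact hspec.symm

lemma trace_mul_nonneg' {X Y : Matrix (Fin n) (Fin n) ℂ}
    (hX : X.PosSemidef) (hY : Y.PosSemidef) : 0 ≤ (X * Y).trace := by
  have hS := (psdSqrt_facts hX).1
  have hSS : psdSqrt X * psdSqrt X = X := (psdSqrt_facts hX).2
  have h := hY.mul_mul_conjTranspose_same (psdSqrt X)
  rw [hS.isHermitian] at h
  have h1 : (psdSqrt X * Y * psdSqrt X).trace = (X * Y).trace := by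
    rw [Matrix.trace_mul_cycle]
    rw [hSS]
  rw [← h1]
  exact posSemidef_trace_nonneg h

lemma inner_toEuclideanCLM (M : Matrix (Fin n) (Fin n) ℂ) (x : Fin n → ℂ) :
    (inner ℂ ((WithLp.equiv 2 _).symm x)
      (Matrix.toEuclideanCLM (𝕜 := ℂ) M ((WithLp.equiv 2 _).symm x)) : ℂ)
      = dotProduct (star x) (M *ᵥ x) :=
  (EuclideanSpace.inner_eq_star_dotProduct _ _).trans (dotProduct_comm _ _)

lemma re_quad_le_opNorm (M : Matrix (Fin n) (Fin n) ℂ) (x : Fin n → ℂ) :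
    (dotProduct (star x) (M *ᵥ x)).re
      ≤ opNorm M * (dotProduct (star x) x).re := by
  set y : EuclideanSpace ℂ (Fin n) := (WithLp.equiv 2 _).symm x with hy
  have h1 : dotProduct (star x) (M *ᵥ x)
      = (inner ℂ y (Matrix.toEuclideanCLM (𝕜 := ℂ) M y) : ℂ) :=
    (inner_toEuclideanCLM M x).symm
  have h2 : dotProduct (star x) x = (inner ℂ y y : ℂ) :=
    ((EuclideanSpace.inner_eq_star_dotProduct _ _).trans (dotProduct_comm _ _)).symm
  rw [h1, h2]
  have h3 : (inner ℂ y (Matrix.toEuclideanCLM (𝕜 := ℂ) M y) : ℂ).re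
      ≤ ‖(inner ℂ y (Matrix.toEuclideanCLM (𝕜 := ℂ) M y) : ℂ)‖ := Complex.re_le_norm _
  have h4 : ‖(inner ℂ y (Matrix.toEuclideanCLM (𝕜 := ℂ) M y) : ℂ)‖
      ≤ ‖y‖ * ‖Matrix.toEuclideanCLM (𝕜 := ℂ) M y‖ := norm_inner_le_norm _ _
  have h5 : ‖Matrix.toEuclideanCLM (𝕜 := ℂ) M y‖ ≤ opNorm M * ‖y‖ :=
    (Matrix.toEuclideanCLM (𝕜 := ℂ) M).le_opNorm y
  have h6 : ((inner ℂ y y : ℂ)).re = ‖y‖ ^ 2 := by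
    have := @inner_self_eq_norm_sq ℂ _ _ _ _ y
    simpa using this
  rw [h6]
  have hn : 0 ≤ ‖y‖ := norm_nonneg y
  nlinarith [norm_nonneg (Matrix.toEuclideanCLM (𝕜 := ℂ) M y)]

lemma opNorm_nonneg (M : Matrix (Fin n) (Fin n) ℂ) : 0 ≤ opNorm M := norm_nonneg _

open scoped Matrix.Norms.L2Operator in
lemma opNorm_mul_self {S : Matrix (Fin n) (Fin n) ℂ} (hS : S.IsHermitian) :
    opNorm (S * S) = opNorm S * opNorm S := by
  have h0 : ∀ (A : Matrix (Fin n) (Fin n) ℂ), opNorm A = ‖A‖ :=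
    fun A => (Matrix.cstar_norm_def A).symm
  rw [h0, h0, ← Matrix.l2_opNorm_conjTranspose_mul_self S, hS]

lemma opNorm_le_one {M : Matrix (Fin n) (Fin n) ℂ} (hM : M.PosSemidef)
    (h1M : ((1 : Matrix (Fin n) (Fin n) ℂ) - M).PosSemidef) : opNorm M ≤ 1 := by
  have hMM : (M - M * M).PosSemidef := by
    obtain ⟨S, hSh, hss⟩ : ∃ S : Matrix (Fin n) (Fin n) ℂ, S.IsHermitian ∧ S * S = M :=
      ⟨psdSqrt M, (psdSqrt_facts hM).1.1, (psdSqrt_facts hM).2⟩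
    have h := h1M.mul_mul_conjTranspose_same S
    rw [hSh] at h
    have key : S * (1 - M) * S = M - M * M := by
      rw [← hss]; noncomm_ring
    rwa [key] at h
  unfold opNorm
  refine ContinuousLinearMap.opNorm_le_bound _ zero_le_one (fun y => ?_)
  rw [one_mul]
  set T := Matrix.toEuclideanCLM (𝕜 := ℂ) M with hT
  set x : Fin n → ℂ := WithLp.equiv 2 _ y with hx
  have hyx : y = (WithLp.equiv 2 _).symm x := by simp [hx]
  have hadj : ContinuousLinearMap.adjoint T = T := by
    rw [← ContinuousLinearMap.star_eq_adjoint, hT, ← map_star,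
      Matrix.star_eq_conjTranspose, hM.isHermitian]
  have hTT : (inner ℂ (T y) (T y) : ℂ) = inner ℂ y (Matrix.toEuclideanCLM (𝕜 := ℂ) (M * M) y) := by
    rw [map_mul, ContinuousLinearMap.mul_apply]
    nth_rewrite 1 [← hadj]
    exact ContinuousLinearMap.adjoint_inner_left T (T y) y
  have e1 : ‖T y‖ ^ 2 = ((inner ℂ (T y) (T y) : ℂ)).re := by
    have := @inner_self_eq_norm_sq ℂ _ _ _ _ (T y)
    simpa using this.symm
  have e2 : ‖y‖ ^ 2 = ((inner ℂ y y : ℂ)).re := by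
    have := @inner_self_eq_norm_sq ℂ _ _ _ _ y
    simpa using this.symm
  have q1 : ((inner ℂ y (Matrix.toEuclideanCLM (𝕜 := ℂ) (M * M) y) : ℂ)).re
      ≤ ((inner ℂ y (T y) : ℂ)).re := by
    rw [hyx, inner_toEuclideanCLM, hT, inner_toEuclideanCLM]
    have h := hMM.dotProduct_mulVec_nonneg x
    rw [Matrix.sub_mulVec, dotProduct_sub] at h
    have h' := (Complex.nonneg_iff.mp h).1
    rw [Complex.sub_re] at h'
    linarith
  have q2 : ((inner ℂ y (T y) : ℂ)).re ≤ ((inner ℂ y y : ℂ)).re := by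
    have h := h1M.dotProduct_mulVec_nonneg x
    rw [Matrix.sub_mulVec, dotProduct_sub, Matrix.one_mulVec] at h
    have h' := (Complex.nonneg_iff.mp h).1
    rw [Complex.sub_re] at h'
    have e3 : (inner ℂ y (T y) : ℂ) = dotProduct (star x) (M *ᵥ x) := by
      rw [hyx, hT]; exact inner_toEuclideanCLM M x
    have e4 : (inner ℂ y y : ℂ) = dotProduct (star x) x := by
      rw [hyx]; exact (EuclideanSpace.inner_eq_star_dotProduct _ _).trans (dotProduct_comm _ _)
    rw [e3, e4]; linarith
  have hsq : ‖T y‖ ^ 2 ≤ ‖y‖ ^ 2 := by rw [e1, e2, hTT]; linarith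
  nlinarith [norm_nonneg (T y), norm_nonneg y]

lemma posSemidef_add {X Y : Matrix (Fin n) (Fin n) ℂ}
    (hX : X.PosSemidef) (hY : Y.PosSemidef) : (X + Y).PosSemidef := by
  refine Matrix.PosSemidef.of_dotProduct_mulVec_nonneg (hX.1.add hY.1) (fun x => ?_)
  rw [Matrix.add_mulVec, dotProduct_add]
  exact add_nonneg (hX.dotProduct_mulVec_nonneg x) (hY.dotProduct_mulVec_nonneg x)

lemma posSemidef_sum {ι : Type*} (s : Finset ι) (f : ι → Matrix (Fin n) (Fin n) ℂ)
    (hf : ∀ j ∈ s, (f j).PosSemidef) : (∑ j ∈ s, f j).PosSemidef := by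
  classical
  induction s using Finset.induction_on with
  | empty => simpa using Matrix.PosSemidef.zero
  | @insert a s ha ih =>
    rw [Finset.sum_insert ha]
    exact posSemidef_add (hf a (Finset.mem_insert_self a s))
      (ih fun j hj => hf j (Finset.mem_insert_of_mem hj))

lemma smul_one_sub_posSemidef {M : Matrix (Fin n) (Fin n) ℂ} (hM : M.PosSemidef) :
    (((opNorm M : ℂ)) • (1 : Matrix (Fin n) (Fin n) ℂ) - M).PosSemidef := by
  refine Matrix.PosSemidef.of_dotProduct_mulVec_nonneg ?_ ?_
  · have h1 : (((opNorm M : ℂ)) • (1 : Matrix (Fin n) (Fin n) ℂ)).IsHermitian := by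
      rw [Matrix.IsHermitian, Matrix.conjTranspose_smul, Matrix.conjTranspose_one,
        Complex.star_def, Complex.conj_ofReal]
    exact h1.sub hM.1
  · intro x
    have hq := re_quad_le_opNorm M x
    have hxx := dotProduct_star_self_nonneg x
    have hMx := hM.dotProduct_mulVec_nonneg x
    rw [Matrix.sub_mulVec, dotProduct_sub, Matrix.smul_mulVec,
      Matrix.one_mulVec, dotProduct_smul]
    rw [Complex.nonneg_iff]
    obtain ⟨hxxre, hxxim⟩ := Complex.nonneg_iff.mp hxx
    obtain ⟨hMxre, hMxim⟩ := Complex.nonneg_iff.mp hMx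
    constructor
    · rw [Complex.sub_re, smul_eq_mul, Complex.mul_re, Complex.ofReal_re, Complex.ofReal_im]
      rw [← hxxim]
      simp only [zero_mul, mul_zero, sub_zero]
      linarith
    · rw [Complex.sub_im, smul_eq_mul, Complex.mul_im, Complex.ofReal_re, Complex.ofReal_im]
      rw [← hxxim, ← hMxim]
      ring

lemma trace_mul_le_opNorm {M ρ : Matrix (Fin n) (Fin n) ℂ} (hM : M.PosSemidef)
    (hρ : ρ.PosSemidef) (hτ : ρ.trace = 1) : ((M * ρ).trace).re ≤ opNorm M := by
  have h0 := trace_mul_nonneg' (smul_one_sub_posSemidef hM) hρ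
  rw [Matrix.sub_mul, Matrix.smul_mul, Matrix.one_mul, Matrix.trace_sub,
    Matrix.trace_smul, hτ] at h0
  have h1 := (Complex.nonneg_iff.mp h0).1
  rw [Complex.sub_re] at h1
  simpa using h1

lemma povm_one_sub_posSemidef {N NA : ℕ} {A : Fin NA → Matrix (Fin N) (Fin N) ℂ}
    (hA : IsPOVM A) (i : Fin NA) : ((1 : Matrix (Fin N) (Fin N) ℂ) - A i).PosSemidef := by
  have h1 : (1 : Matrix (Fin N) (Fin N) ℂ) - A i = ∑ j ∈ Finset.univ.erase i, A j := by
    rw [← hA.2, ← Finset.add_sum_erase _ _ (Finset.mem_univ i)]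
    abel
  rw [h1]
  exact posSemidef_sum _ _ fun j _ => hA.1 j

lemma probVec_isProbVec {N M : ℕ} {A : Fin M → Matrix (Fin N) (Fin N) ℂ}
    (hA : IsPOVM A) {ρ : Matrix (Fin N) (Fin N) ℂ} (hρ : IsDensityOp ρ) :
    IsProbVec (probVec A ρ) := by
  constructor
  · intro i
    exact (Complex.nonneg_iff.mp (trace_mul_nonneg' (hA.1 i) hρ.1)).1
  · unfold probVec
    rw [← Complex.re_sum, ← Matrix.trace_sum]
    have h : ∑ i, A i * ρ = ρ := by rw [← Finset.sum_mul, hA.2, one_mul]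
    rw [h, hρ.2, Complex.one_re]

lemma povm_overlap_facts {N M : ℕ} (hM : 0 < M) {A : Fin M → Matrix (Fin N) (Fin N) ℂ}
    (hA : IsPOVM A) {ρ : Matrix (Fin N) (Fin N) ℂ} (hρ : IsDensityOp ρ) :
    (0 ≤ covA A ∧ covA A ≤ 1) ∧ ∀ i, probVec A ρ i ≤ covA A ^ 2 := by
  haveI : Nonempty (Fin M) := ⟨⟨0, hM⟩⟩
  have hsq : ∀ i, opNorm (psdSqrt (A i)) ^ 2 = opNorm (A i) := by
    intro i
    have h := opNorm_mul_self (psdSqrt_facts (hA.1 i)).1.1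
    rw [(psdSqrt_facts (hA.1 i)).2] at h
    rw [pow_two, ← h]
  have hle1 : ∀ i, opNorm (psdSqrt (A i)) ≤ 1 := by
    intro i
    have h2 : opNorm (A i) ≤ 1 := opNorm_le_one (hA.1 i) (povm_one_sub_posSemidef hA i)
    nlinarith [opNorm_nonneg (psdSqrt (A i)), hsq i]
  have hbdd : BddAbove (Set.range fun i => opNorm (psdSqrt (A i))) := by
    refine ⟨1, ?_⟩
    rintro _ ⟨i, rfl⟩
    exact hle1 i
  refine ⟨⟨le_trans (opNorm_nonneg _) (le_ciSup hbdd ⟨0, hM⟩), ciSup_le hle1⟩, fun i => ?_⟩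
  have hb1 : probVec A ρ i ≤ opNorm (A i) := trace_mul_le_opNorm (hA.1 i) hρ.1 hρ.2
  have hb2 : opNorm (A i) ≤ covA A ^ 2 := by
    rw [← hsq i]
    exact pow_le_pow_left₀ (opNorm_nonneg _) (le_ciSup hbdd i) 2
  exact le_trans hb1 hb2

end QuantumAux

/-- Explicit (generally weaker) lower bound
`D_{(h_A,φ_A)}(γ_A) + D_{(h_B,φ_B)}(γ_B)` for the entropy sum, valid for any overlap triplet. -/
theorem general_entropic_uncertainty_relation_weak
    {N NA NB : ℕ} (hNA : 0 < NA) (hNB : 0 < NB)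
    (A : Fin NA → Matrix (Fin N) (Fin N) ℂ) (B : Fin NB → Matrix (Fin N) (Fin N) ℂ)
    (hA : IsPOVM A) (hB : IsPOVM B)
    (ρ : Matrix (Fin N) (Fin N) ℂ) (hρ : IsDensityOp ρ)
    (eA eB : EntropicPair)
    (γA γB : ℝ)
    (hγA : γA = Real.arccos (covA A)) (hγB : γB = Real.arccos (covA B)) :
    eA.H (probVec A ρ) + eB.H (probVec B ρ) ≥ eA.D γA + eB.D γB := by
  obtain ⟨⟨hA0, hA1⟩, hAub⟩ := povm_overlap_facts hNA hA hρ
  obtain ⟨⟨hB0, hB1⟩, hBub⟩ := povm_overlap_facts hNB hB hρ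
  have hDA : eA.D γA = eA.Hmin (covA A ^ 2) := by
    unfold EntropicPair.D
    rw [hγA, Real.cos_arccos (by linarith) hA1]
  have hDB : eB.D γB = eB.Hmin (covA B ^ 2) := by
    unfold EntropicPair.D
    rw [hγB, Real.cos_arccos (by linarith) hB1]
  have hHA : eA.Hmin (covA A ^ 2) ≤ eA.H (probVec A ρ) :=
    Hmin_le_H eA _ (probVec_isProbVec hA hρ) (pow_le_one₀ hA0 hA1) hAub
  have hHB : eB.Hmin (covA B ^ 2) ≤ eB.H (probVec B ρ) :=
    Hmin_le_H eB _ (probVec_isProbVec hB hρ) (pow_le_one₀ hB0 hB1) hBub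
  rw [ge_iff_le, hDA, hDB]
  exact add_le_add hHA hHB

end
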